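/- With (A⟨X⟩, ⋆, Δ, ε) the bialgebra associated to ⋆ ∈ 𝒫 and a_⋆ the alternating-sum map over compositions, a_⋆ is a two-sided antipode: m∘(a_⋆⊗Id)∘Δ = μ∘ε = m∘(Id⊗a_⋆)∘Δ, so (A⟨X⟩, ⋆, Δ, ε, a_⋆) is a Hopf algebra. -/

import Mathlib

open Finsupp Finset Filter

/-- A word `w` seen as an element of the free module `A⟨X⟩` (coefficient 1). -/
noncomputable def delta (A : Type*) [CommRing A] {X : Type*} (w : List X) : List X →₀ A :=
  Finsupp.single w 1

/-- Left concatenation by a letter, as a linear map on `A⟨X⟩`. -/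
noncomputable def lcons (A : Type*) [CommRing A] {X : Type*} (x : X) :
    (List X →₀ A) →ₗ[A] (List X →₀ A) :=
  Finsupp.lmapDomain A A (List.cons x)

/-- Cut a word into the pieces prescribed by a composition (list of block sizes). -/
def splitWord {X : Type*} : List ℕ → List X → List (List X)
  | [], _ => []
  | i :: c, w => w.take i :: splitWord c (w.drop i)

/-- Iterated `⋆`-product of a list of words (empty product = empty word). -/
noncomputable def prodStar {A X : Type*} [CommRing A]
    (star : (List X →₀ A) →ₗ[A] (List X →₀ A) →ₗ[A] (List X →₀ A)) :
    List (List X) → (List X →₀ A)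
  | [] => delta A []
  | u :: l => star (delta A u) (prodStar star l)

/-- The candidate antipode: `a_⋆(x₁…x_n) = Σ_(compositions (i₁,…,i_k) of n) (-1)^k
(x₁…x_(i₁)) ⋆ … ⋆ (x_(i₁+…+i_(k-1)+1)…x_n)`. -/
noncomputable def aStar {A X : Type*} [CommRing A]
    (star : (List X →₀ A) →ₗ[A] (List X →₀ A) →ₗ[A] (List X →₀ A)) (w : List X) :
    List X →₀ A :=
  ∑ c : Composition w.length,
    ((-1 : A) ^ c.blocks.length) • prodStar star (splitWord c.blocks w)

section Aux

variable {A X : Type*} [CommRing A]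
  (star : (List X →₀ A) →ₗ[A] (List X →₀ A) →ₗ[A] (List X →₀ A))
  (brC : X → X → A) (brX : X → X → X)

lemma lcons_delta (x : X) (w : List X) : lcons A x (delta A w) = delta A (x :: w) := by
  simp [lcons, delta, Finsupp.lmapDomain_apply, Finsupp.mapDomain_single]

lemma single_eq_smul_delta (w : List X) (a : A) : Finsupp.single w a = a • delta A w := by
  simp [delta, Finsupp.smul_single]

lemma sunitl (hunitl : ∀ w : List X, star (delta A []) (delta A w) = delta A w)
    (f : List X →₀ A) : star (delta A []) f = f := by
  induction f using Finsupp.induction_linear with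
  | zero => simp
  | add f g hf hg => simp [map_add, hf, hg]
  | single w a => rw [single_eq_smul_delta, map_smul, hunitl]

lemma sunitr (hunitr : ∀ w : List X, star (delta A w) (delta A []) = delta A w)
    (f : List X →₀ A) : star f (delta A []) = f := by
  induction f using Finsupp.induction_linear with
  | zero => simp
  | add f g hf hg => simp only [map_add, LinearMap.add_apply, hf, hg]
  | single w a => rw [single_eq_smul_delta, map_smul, LinearMap.smul_apply, hunitr]

lemma scaled_lcons_congr {c₁ c₂ : A} {x₁ x₂ : X}
    (h : c₁ • delta A [x₁] = c₂ • delta A [x₂]) (F : List X →₀ A) :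
    c₁ • lcons A x₁ F = c₂ • lcons A x₂ F := by
  by_cases hx : x₁ = x₂
  · subst hx
    have h1 := DFunLike.congr_fun h [x₁]
    simp [delta, Finsupp.single_eq_same] at h1
    rw [h1]
  · have h1 := DFunLike.congr_fun h [x₁]
    have h2 := DFunLike.congr_fun h [x₂]
    simp [delta, Finsupp.single_apply, hx, Ne.symm hx] at h1 h2
    rw [h1, ← h2, zero_smul, zero_smul]

variable (hrec : ∀ (a b : X) (u v : List X),
      star (delta A (a :: u)) (delta A (b :: v)) =
        lcons A a (star (delta A u) (delta A (b :: v)))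
          + lcons A b (star (delta A (a :: u)) (delta A v))
          + brC a b • lcons A (brX a b) (star (delta A u) (delta A v)))

include hrec in
lemma hrecL (x c : X) (t : List X) (f : List X →₀ A) :
    star (lcons A x f) (delta A (c :: t)) =
      lcons A x (star f (delta A (c :: t))) + lcons A c (star (lcons A x f) (delta A t))
        + brC x c • lcons A (brX x c) (star f (delta A t)) := by
  induction f using Finsupp.induction_linear with
  | zero => simp
  | add f g hf hg =>
      simp only [map_add, LinearMap.add_apply, hf, hg, smul_add]
      abel
  | single w a =>
      rw [single_eq_smul_delta, map_smul, map_smul, LinearMap.smul_apply, lcons_delta,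
        hrec x c w t]
      simp only [map_smul, lcons_delta, smul_add, LinearMap.smul_apply]
      rw [smul_comm (brC x c) a]

include hrec in
lemma hrecR (a y : X) (u : List X) (g : List X →₀ A) :
    star (delta A (a :: u)) (lcons A y g) =
      lcons A a (star (delta A u) (lcons A y g)) + lcons A y (star (delta A (a :: u)) g)
        + brC a y • lcons A (brX a y) (star (delta A u) g) := by
  induction g using Finsupp.induction_linear with
  | zero => simp
  | add f g hf hg =>
      simp only [map_add, hf, hg, smul_add]
      abel
  | single w b =>
      rw [single_eq_smul_delta, map_smul, map_smul, map_smul, lcons_delta, hrec a y u w]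
      simp only [map_smul, lcons_delta, smul_add]
      rw [smul_comm (brC a y) b]

include hrec in
lemma expandL (a b c : X) (u v t : List X) :
    star (star (delta A (a::u)) (delta A (b::v))) (delta A (c::t)) =
      lcons A a (star (star (delta A u) (delta A (b::v))) (delta A (c::t)))
      + lcons A b (star (star (delta A (a::u)) (delta A v)) (delta A (c::t)))
      + brC a b • lcons A (brX a b) (star (star (delta A u) (delta A v)) (delta A (c::t)))
      + lcons A c (star (star (delta A (a::u)) (delta A (b::v))) (delta A t))
      + brC a c • lcons A (brX a c) (star (star (delta A u) (delta A (b::v))) (delta A t))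
      + brC b c • lcons A (brX b c) (star (star (delta A (a::u)) (delta A v)) (delta A t))
      + (brC a b * brC (brX a b) c) • lcons A (brX (brX a b) c)
          (star (star (delta A u) (delta A v)) (delta A t)) := by
  conv_lhs => rw [hrec a b u v]
  rw [map_add, map_add, map_smul, LinearMap.add_apply, LinearMap.add_apply,
    LinearMap.smul_apply]
  rw [hrecL star brC brX hrec a c t, hrecL star brC brX hrec b c t,
    hrecL star brC brX hrec (brX a b) c t]
  have mid : (lcons A c) ((star ((lcons A a) ((star (delta A u)) (delta A (b :: v)))))
        (delta A t))
      + (lcons A c) ((star ((lcons A b) ((star (delta A (a :: u))) (delta A v)))) (delta A t))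
      + brC a b • (lcons A c) ((star ((lcons A (brX a b))
          ((star (delta A u)) (delta A v)))) (delta A t))
      = lcons A c (star (star (delta A (a::u)) (delta A (b::v))) (delta A t)) := by
    rw [← map_smul (lcons A c), ← map_add (lcons A c), ← map_add (lcons A c)]
    congr 1
    rw [hrec a b u v]
    simp only [map_add, LinearMap.add_apply, map_smul, LinearMap.smul_apply]
  rw [← mid]
  simp only [smul_add, smul_smul]
  abel

include hrec in
lemma expandR (a b c : X) (u v t : List X) :
    star (delta A (a::u)) (star (delta A (b::v)) (delta A (c::t))) =
      lcons A a (star (delta A u) (star (delta A (b::v)) (delta A (c::t))))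
      + lcons A b (star (delta A (a::u)) (star (delta A v) (delta A (c::t))))
      + brC a b • lcons A (brX a b) (star (delta A u) (star (delta A v) (delta A (c::t))))
      + lcons A c (star (delta A (a::u)) (star (delta A (b::v)) (delta A t)))
      + brC a c • lcons A (brX a c) (star (delta A u) (star (delta A (b::v)) (delta A t)))
      + brC b c • lcons A (brX b c) (star (delta A (a::u)) (star (delta A v) (delta A t)))
      + (brC b c * brC a (brX b c)) • lcons A (brX a (brX b c))
          (star (delta A u) (star (delta A v) (delta A t))) := by
  conv_lhs => rw [hrec b c v t]
  rw [map_add, map_add, map_smul]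
  rw [hrecR star brC brX hrec a b u, hrecR star brC brX hrec a c u,
    hrecR star brC brX hrec a (brX b c) u]
  have mid : (lcons A a) ((star (delta A u)) ((lcons A b) ((star (delta A v)) (delta A (c :: t)))))
      + (lcons A a) ((star (delta A u)) ((lcons A c) ((star (delta A (b :: v))) (delta A t))))
      + brC b c • (lcons A a) ((star (delta A u)) ((lcons A (brX b c))
          ((star (delta A v)) (delta A t))))
      = lcons A a (star (delta A u) (star (delta A (b::v)) (delta A (c::t)))) := by
    rw [← map_smul (lcons A a), ← map_smul (star (delta A u)),
      ← map_add (lcons A a), ← map_add (star (delta A u)),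
      ← map_add (lcons A a), ← map_add (star (delta A u))]
    congr 2
    rw [hrec b c v t]
  rw [← mid]
  simp only [smul_add, smul_smul]
  abel

include hrec in
lemma assoc_basis
    (hunitl : ∀ w : List X, star (delta A []) (delta A w) = delta A w)
    (hunitr : ∀ w : List X, star (delta A w) (delta A []) = delta A w)
    (hassoc : ∀ a b c : X,
      (brC a b * brC (brX a b) c) • delta A [brX (brX a b) c]
        = (brC b c * brC a (brX b c)) • delta A [brX a (brX b c)]) :
    ∀ (N : ℕ) (u v t : List X), u.length + v.length + t.length ≤ N →
      star (star (delta A u) (delta A v)) (delta A t)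
        = star (delta A u) (star (delta A v) (delta A t)) := by
  intro N
  induction N with
  | zero =>
    intro u v t h
    have hu : u = [] := by
      cases u with
      | nil => rfl
      | cons a u => simp at h
    subst hu
    simp only [sunitl star hunitl]
  | succ N ih =>
    intro u v t h
    cases u with
    | nil => simp only [sunitl star hunitl]
    | cons a u =>
      cases v with
      | nil => simp only [sunitr star hunitr, sunitl star hunitl]
      | cons b v =>
        cases t with
        | nil => simp only [sunitr star hunitr]
        | cons c t =>
          simp only [List.length_cons] at h
          rw [expandL star brC brX hrec a b c u v t,
            expandR star brC brX hrec a b c u v t]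
          rw [ih u (b::v) (c::t) (by simp only [List.length_cons]; omega),
            ih (a::u) v (c::t) (by simp only [List.length_cons]; omega),
            ih u v (c::t) (by simp only [List.length_cons]; omega),
            ih (a::u) (b::v) t (by simp only [List.length_cons]; omega),
            ih u (b::v) t (by simp only [List.length_cons]; omega),
            ih (a::u) v t (by simp only [List.length_cons]; omega),
            ih u v t (by omega)]
          congr 1
          exact scaled_lcons_congr (hassoc a b c) _

include hrec in
lemma starAssoc
    (hunitl : ∀ w : List X, star (delta A []) (delta A w) = delta A w)
    (hunitr : ∀ w : List X, star (delta A w) (delta A []) = delta A w)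
    (hassoc : ∀ a b c : X,
      (brC a b * brC (brX a b) c) • delta A [brX (brX a b) c]
        = (brC b c * brC a (brX b c)) • delta A [brX a (brX b c)]) :
    ∀ f g h : List X →₀ A, star (star f g) h = star f (star g h) := by
  have base : ∀ (u v : List X) (h : List X →₀ A),
      star (star (delta A u) (delta A v)) h = star (delta A u) (star (delta A v) h) := by
    intro u v h
    induction h using Finsupp.induction_linear with
    | zero => simp
    | add f g hf hg => simp only [map_add, hf, hg]
    | single w a =>
      rw [single_eq_smul_delta]
      simp only [map_smul, LinearMap.smul_apply]
      rw [assoc_basis star brC brX hrec hunitl hunitr hassoc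
          (u.length + v.length + w.length) u v w le_rfl]
  have base2 : ∀ (u : List X) (g h : List X →₀ A),
      star (star (delta A u) g) h = star (delta A u) (star g h) := by
    intro u g h
    induction g using Finsupp.induction_linear with
    | zero => simp
    | add f g hf hg => simp only [map_add, LinearMap.add_apply, hf, hg]
    | single w a =>
      rw [single_eq_smul_delta]
      simp only [map_smul, LinearMap.smul_apply]
      rw [base]
  intro f g h
  induction f using Finsupp.induction_linear with
  | zero => simp
  | add f g hf hg => simp only [map_add, LinearMap.add_apply, hf, hg]
  | single w a =>
    rw [single_eq_smul_delta]
    simp only [map_smul, LinearMap.smul_apply]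
    rw [base2]

end Aux

lemma comp_blocks_ne_nil {n : ℕ} (c : Composition (n+1)) : c.blocks ≠ [] := by
  intro h
  have := c.blocks_sum
  rw [h] at this
  simp at this

lemma comp_headI_pos {n : ℕ} (c : Composition (n+1)) : 1 ≤ c.blocks.headI := by
  apply c.one_le_blocks
  cases h : c.blocks with
  | nil => exact absurd h (comp_blocks_ne_nil c)
  | cons a l => simp

lemma comp_cons_headI_tail {n : ℕ} (c : Composition (n+1)) :
    c.blocks.headI :: c.blocks.tail = c.blocks := by
  cases h : c.blocks with
  | nil => exact absurd h (comp_blocks_ne_nil c)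
  | cons a l => rfl

lemma comp_headI_le {n : ℕ} (c : Composition (n+1)) : c.blocks.headI ≤ n + 1 := by
  have h := c.blocks_sum
  rw [← comp_cons_headI_tail c, List.sum_cons] at h
  omega

def fsplit {n : ℕ} (c : Composition (n+1)) : Σ i : ℕ, Composition (n - i) :=
  ⟨c.blocks.headI - 1,
   ⟨c.blocks.tail, fun hi => c.blocks_pos (List.mem_of_mem_tail hi), by
      have h1 := comp_cons_headI_tail c
      have h2 := comp_headI_pos c
      have h3 := c.blocks_sum
      have h4 := comp_headI_le c
      rw [← h1, List.sum_cons] at h3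
      omega⟩⟩

def fjoin {n : ℕ} (i : ℕ) (hi : i ≤ n) (c : Composition (n - i)) : Composition (n+1) :=
  ⟨(i+1) :: c.blocks, by
    rintro j hj
    rcases List.mem_cons.1 hj with rfl | hj
    · omega
    · exact c.blocks_pos hj, by
    rw [List.sum_cons, c.blocks_sum]
    omega⟩

lemma compSumFirst {M : Type*} [AddCommMonoid M] (n : ℕ) (f : List ℕ → M) :
    ∑ c : Composition (n+1), f c.blocks
      = ∑ i ∈ Finset.range (n+1), ∑ c : Composition (n-i), f ((i+1) :: c.blocks) := by
  rw [Finset.sum_sigma' (Finset.range (n+1))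
    (fun i => (Finset.univ : Finset (Composition (n-i))))
    (fun i c => f ((i+1) :: c.blocks))]
  refine Finset.sum_bij' (fun c _ => fsplit c)
    (fun p hp => fjoin p.1 (by
      have := (Finset.mem_sigma.1 hp).1
      simpa using Nat.lt_succ_iff.mp (Finset.mem_range.mp this)) p.2)
    ?_ ?_ ?_ ?_ ?_
  · intro c _
    rw [Finset.mem_sigma]
    refine ⟨Finset.mem_range.2 ?_, Finset.mem_univ _⟩
    have := comp_headI_le c
    have := comp_headI_pos c
    simp only [fsplit]
    omega
  · intro p hp
    exact Finset.mem_univ _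
  · intro c _
    apply Composition.ext
    simp only [fjoin, fsplit]
    have h2 := comp_headI_pos c
    rw [show c.blocks.headI - 1 + 1 = c.blocks.headI by omega, comp_cons_headI_tail c]
  · rintro ⟨i, c⟩ hp
    have hi : i ≤ n := by
      have := (Finset.mem_sigma.1 hp).1
      simpa using Nat.lt_succ_iff.mp (Finset.mem_range.mp this)
    show (⟨i + 1 - 1, _⟩ : Σ i : ℕ, Composition (n - i)) = ⟨i, c⟩
    congr 1
  · intro c _
    have h2 := comp_headI_pos c
    simp only [fsplit]
    rw [show c.blocks.headI - 1 + 1 = c.blocks.headI by omega, comp_cons_headI_tail c]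

def revC {n : ℕ} (c : Composition n) : Composition n :=
  ⟨c.blocks.reverse, fun h => c.blocks_pos (List.mem_reverse.1 h), by
    rw [List.sum_reverse, c.blocks_sum]⟩

def revE (n : ℕ) : Composition n ≃ Composition n :=
  ⟨revC, revC, fun c => Composition.ext (by simp [revC]),
    fun c => Composition.ext (by simp [revC])⟩

lemma sum_rev {M : Type*} [AddCommMonoid M] (n : ℕ) (f : List ℕ → M) :
    ∑ c : Composition n, f c.blocks = ∑ c : Composition n, f c.blocks.reverse :=
  Fintype.sum_equiv (revE n) _ _ (fun c => by simp [revE, revC])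

lemma compSumLast {M : Type*} [AddCommMonoid M] (n : ℕ) (f : List ℕ → M) :
    ∑ c : Composition (n+1), f c.blocks
      = ∑ i ∈ Finset.range (n+1), ∑ c : Composition (n-i), f (c.blocks ++ [i+1]) := by
  rw [sum_rev, compSumFirst n (fun l => f l.reverse)]
  refine Finset.sum_congr rfl fun i _ => ?_
  rw [sum_rev (n - i) (fun l => f (l ++ [i+1]))]
  refine Finset.sum_congr rfl fun c _ => ?_
  simp

lemma splitWord_append {X : Type*} (b₁ b₂ : List ℕ) (w : List X) :
    splitWord (b₁ ++ b₂) w = splitWord b₁ w ++ splitWord b₂ (w.drop b₁.sum) := by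
  induction b₁ generalizing w with
  | nil => simp [splitWord]
  | cons i b₁ ih =>
    simp only [List.cons_append, splitWord, List.sum_cons, List.append_eq]
    rw [ih, List.drop_drop, Nat.add_comm]

lemma splitWord_take {X : Type*} (bl : List ℕ) (w : List X) :
    splitWord bl (w.take bl.sum) = splitWord bl w := by
  induction bl generalizing w with
  | nil => simp [splitWord]
  | cons i bl ih =>
    simp only [splitWord, List.sum_cons]
    congr 1
    · rw [List.take_take]; simp
    · rw [List.drop_take]; simpa using ih (w.drop i)


lemma sum_comp_cast {M : Type*} [AddCommMonoid M] {m k : ℕ} (h : m = k) (f : List ℕ → M) :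
    ∑ c : Composition m, f c.blocks = ∑ c : Composition k, f c.blocks := by subst h; rfl

section Aux2

variable {A X : Type*} [CommRing A]
  (star : (List X →₀ A) →ₗ[A] (List X →₀ A) →ₗ[A] (List X →₀ A))
  (brC : X → X → A) (brX : X → X → X)
  (hunitl : ∀ w : List X, star (delta A []) (delta A w) = delta A w)
  (hunitr : ∀ w : List X, star (delta A w) (delta A []) = delta A w)
  (hrec : ∀ (a b : X) (u v : List X),
      star (delta A (a :: u)) (delta A (b :: v)) =
        lcons A a (star (delta A u) (delta A (b :: v)))
          + lcons A b (star (delta A (a :: u)) (delta A v))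
          + brC a b • lcons A (brX a b) (star (delta A u) (delta A v)))
  (hassoc : ∀ a b c : X,
      (brC a b * brC (brX a b) c) • delta A [brX (brX a b) c]
        = (brC b c * brC a (brX b c)) • delta A [brX a (brX b c)])

include hrec hunitl hunitr hassoc in
lemma prodStar_append (l₁ l₂ : List (List X)) :
    prodStar star (l₁ ++ l₂) = star (prodStar star l₁) (prodStar star l₂) := by
  induction l₁ with
  | nil => simp [prodStar, sunitl star hunitl]
  | cons u l ih =>
    simp only [List.cons_append, prodStar, List.append_eq, ih]
    rw [starAssoc star brC brX hrec hunitl hunitr hassoc]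

set_option linter.unusedSectionVars false in
lemma aStar_nil : aStar star ([] : List X) = delta A [] := by
  have hbl : ∀ c : Composition (0:ℕ), c.blocks = [] := by
    intro c
    cases h : c.blocks with
    | nil => rfl
    | cons a l =>
      have h1 := c.blocks_pos (h ▸ List.mem_cons_self (a := a) (l := l))
      have h2 := c.blocks_sum
      rw [h, List.sum_cons] at h2
      have : l.sum = 0 := by omega
      omega
  rw [aStar]
  rw [Finset.sum_congr rfl (fun c _ => by
      rw [hbl c]
      simp [splitWord, prodStar] : ∀ c ∈ (Finset.univ : Finset (Composition (List.length ([] : List X)))), _ = delta A ([] : List X))]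
  rw [Finset.sum_const, Finset.card_univ]
  have : Fintype.card (Composition (List.length ([] : List X))) = 1 := by
    rw [show List.length ([] : List X) = 0 from rfl, composition_card]
    norm_num
  rw [this, one_smul]

include hrec hunitl hunitr hassoc in
lemma aStar_first (n : ℕ) (w : List X) (hw : w.length = n + 1) :
    aStar star w = ∑ i ∈ Finset.range (n+1),
      -(star (delta A (w.take (i+1))) (aStar star (w.drop (i+1)))) := by
  rw [aStar]
  rw [sum_comp_cast hw (fun bl => ((-1 : A) ^ bl.length) • prodStar star (splitWord bl w))]
  rw [compSumFirst n (fun bl => ((-1 : A) ^ bl.length) • prodStar star (splitWord bl w))]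
  refine Finset.sum_congr rfl fun i hi => ?_
  have hi' : i ≤ n := Nat.lt_succ_iff.mp (Finset.mem_range.mp hi)
  have hlen : (w.drop (i+1)).length = n - i := by rw [List.length_drop, hw]; omega
  rw [aStar]
  rw [sum_comp_cast hlen
    (fun bl => ((-1 : A) ^ bl.length) • prodStar star (splitWord bl (w.drop (i+1))))]
  rw [map_sum, ← Finset.sum_neg_distrib]
  refine Finset.sum_congr rfl fun c _ => ?_
  simp only [splitWord, prodStar, List.length_cons, pow_succ, map_smul, mul_smul]
  simp [mul_comm]

include hrec hunitl hunitr hassoc in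
lemma aStar_last (n : ℕ) (w : List X) (hw : w.length = n + 1) :
    aStar star w = ∑ i ∈ Finset.range (n+1),
      -(star (aStar star (w.take (n-i))) (delta A (w.drop (n-i)))) := by
  rw [aStar]
  rw [sum_comp_cast hw (fun bl => ((-1 : A) ^ bl.length) • prodStar star (splitWord bl w))]
  rw [compSumLast n (fun bl => ((-1 : A) ^ bl.length) • prodStar star (splitWord bl w))]
  refine Finset.sum_congr rfl fun i hi => ?_
  have hi' : i ≤ n := Nat.lt_succ_iff.mp (Finset.mem_range.mp hi)
  have hlen : (w.take (n-i)).length = n - i := by rw [List.length_take, hw]; omega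
  rw [aStar]
  rw [sum_comp_cast hlen
    (fun bl => ((-1 : A) ^ bl.length) • prodStar star (splitWord bl (w.take (n-i))))]
  simp only [map_sum, LinearMap.sum_apply]
  rw [← Finset.sum_neg_distrib]
  refine Finset.sum_congr rfl fun c _ => ?_
  rw [splitWord_append, prodStar_append star brC brX hunitl hunitr hrec hassoc, c.blocks_sum]
  have hd : (w.drop (n-i)).length ≤ i+1 := by rw [List.length_drop, hw]; omega
  have hsp : splitWord c.blocks w = splitWord c.blocks (w.take (n-i)) := by
    have h := splitWord_take c.blocks w
    rw [c.blocks_sum] at h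
    exact h.symm
  simp only [splitWord, List.take_of_length_le hd, prodStar, hunitr, hsp]
  simp only [List.length_append, List.length_cons, List.length_nil, pow_succ, pow_zero,
    mul_smul, map_smul, LinearMap.smul_apply]
  simp [mul_comm]

end Aux2

/-- for `⋆ ∈ 𝒫`, `a_⋆` is a two-sided antipode:
`m∘(a_⋆ ⊗ Id)∘Δ = μ∘ε = m∘(Id ⊗ a_⋆)∘Δ`, so `(A⟨X⟩, ⋆, Δ, ε, a_⋆)` is a Hopf algebra. -/
theorem stmt12 {A X : Type*} [CommRing A]
    (star : (List X →₀ A) →ₗ[A] (List X →₀ A) →ₗ[A] (List X →₀ A))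
    (brC : X → X → A) (brX : X → X → X)
    (hunitl : ∀ w : List X, star (delta A []) (delta A w) = delta A w)
    (hunitr : ∀ w : List X, star (delta A w) (delta A []) = delta A w)
    (hrec : ∀ (a b : X) (u v : List X),
      star (delta A (a :: u)) (delta A (b :: v)) =
        lcons A a (star (delta A u) (delta A (b :: v)))
          + lcons A b (star (delta A (a :: u)) (delta A v))
          + brC a b • lcons A (brX a b) (star (delta A u) (delta A v)))
    (hsym : ∀ a b : X, brC a b • delta A [brX a b] = brC b a • delta A [brX b a])
    (hassoc : ∀ a b c : X,
      (brC a b * brC (brX a b) c) • delta A [brX (brX a b) c]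
        = (brC b c * brC a (brX b c)) • delta A [brX a (brX b c)]) :
    ∀ w : List X,
      ((∑ i ∈ Finset.range (w.length + 1),
          star (aStar star (w.take i)) (delta A (w.drop i)))
        = (match w with | [] => delta A ([] : List X) | _ => 0)) ∧
      ((∑ i ∈ Finset.range (w.length + 1),
          star (delta A (w.take i)) (aStar star (w.drop i)))
        = (match w with | [] => delta A ([] : List X) | _ => 0)) := by

  intro w
  cases w with
  | nil =>
    constructor <;>
    · simp only [List.length_nil, zero_add, Finset.sum_range_one, List.take_nil, List.drop_nil]
      rw [aStar_nil star]
      rw [hunitl]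
  | cons x w' =>
    have hw : (x :: w').length = w'.length + 1 := rfl
    set n := w'.length with hn
    constructor
    · rw [hw, Finset.sum_range_succ]
      have h1 : (x :: w').take (n+1) = x :: w' := List.take_of_length_le (by rw [hw])
      have h2 : (x :: w').drop (n+1) = [] := by
        apply List.drop_eq_nil_of_le
        rw [hw]
      rw [h1, h2, sunitr star hunitr]
      have h3 := aStar_last star brC brX hunitl hunitr hrec hassoc n (x :: w') hw
      have h4 : ∑ i ∈ Finset.range (n+1),
          star (aStar star ((x :: w').take i)) (delta A ((x :: w').drop i))
          = - aStar star (x :: w') := by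
        rw [h3, ← Finset.sum_neg_distrib]
        simp only [neg_neg]
        rw [← Finset.sum_range_reflect
          (fun i => star (aStar star ((x :: w').take i)) (delta A ((x :: w').drop i))) (n+1)]
        simp only [Nat.add_sub_cancel]
      rw [h4, neg_add_cancel]
    · rw [hw, Finset.sum_range_succ']
      have h0 : (x :: w').take 0 = [] := rfl
      have h0' : (x :: w').drop 0 = x :: w' := rfl
      rw [h0, h0', sunitl star hunitl]
      have h3 := aStar_first star brC brX hunitl hunitr hrec hassoc n (x :: w') hw
      have h4 : ∑ i ∈ Finset.range (n+1),
          star (delta A ((x :: w').take (i+1))) (aStar star ((x :: w').drop (i+1)))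
          = - aStar star (x :: w') := by
        rw [h3, ← Finset.sum_neg_distrib]
        simp
      rw [h4, neg_add_cancel]
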